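/- Let n ≥ 2 be an integer. For C ∈ (0, π/2) define Y_C := 2·∫_C^{π/2} ((sin z / sin C)^{2(n−1)} − 1)^{−1/2} dz. Then Y_C → 0 as C → 0⁺. -/

import Mathlib

open Real Set Filter Topology MeasureTheory intervalIntegral

lemma sc_sin_identity (z C : ℝ) :
    Real.sin (z + C) * Real.sin (z - C) = Real.sin z ^ 2 - Real.sin C ^ 2 := by
  rw [Real.sin_add, Real.sin_sub]
  have h1 := Real.sin_sq_add_cos_sq z
  have h2 := Real.sin_sq_add_cos_sq C
  nlinarith [h1, h2]

lemma sc_key_lower (n : ℕ) (hn : 2 ≤ n) {C z : ℝ} (hC : 0 < C) (hC4 : C < π / 4)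
    (hz1 : C < z) (hz2 : z ≤ π / 2) :
    2 * Real.cos C / (π * Real.sin C) * (z - C) ≤
      (Real.sin z / Real.sin C) ^ (2 * (n - 1)) - 1 := by
  have hπ : (0:ℝ) < π := Real.pi_pos
  have hsC : 0 < Real.sin C := Real.sin_pos_of_pos_of_lt_pi hC (by linarith)
  have hcC : 0 < Real.cos C := Real.cos_pos_of_mem_Ioo ⟨by linarith, by linarith⟩
  have hz0 : 0 < z := lt_trans hC hz1
  have hsins : Real.sin C ≤ Real.sin z := by
    apply Real.strictMonoOn_sin.monotoneOn ⟨by linarith, by linarith⟩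
      ⟨by linarith, hz2⟩ hz1.le
  have ht1 : 1 ≤ Real.sin z / Real.sin C := (one_le_div hsC).2 hsins
  have hm : 2 ≤ 2 * (n - 1) := by omega
  have hpow : (Real.sin z / Real.sin C) ^ 2 ≤ (Real.sin z / Real.sin C) ^ (2 * (n - 1)) :=
    pow_le_pow_right₀ ht1 hm
  have hkey2 : 2 * Real.cos C / (π * Real.sin C) * (z - C) ≤
      (Real.sin z / Real.sin C) ^ 2 - 1 := by
    have hJordan : 2 / π * (z - C) ≤ Real.sin (z - C) :=
      Real.mul_le_sin (by linarith) (by linarith)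
    have hsum : Real.sin C * Real.cos C ≤ Real.sin (z + C) := by
      rw [Real.sin_add]
      have hcz : 0 ≤ Real.cos z := Real.cos_nonneg_of_mem_Icc ⟨by linarith, hz2⟩
      nlinarith [mul_le_mul_of_nonneg_right hsins hcC.le]
    have hzc : (0:ℝ) ≤ z - C := by linarith
    have hprod : Real.sin C * Real.cos C * (2 / π * (z - C)) ≤
        Real.sin (z + C) * Real.sin (z - C) :=
      mul_le_mul hsum hJordan (mul_nonneg (by positivity) hzc)
        (le_trans (by positivity) hsum)
    rw [sc_sin_identity] at hprod
    rw [div_pow, show Real.sin z ^ 2 / Real.sin C ^ 2 - 1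
        = (Real.sin z ^ 2 - Real.sin C ^ 2) / Real.sin C ^ 2 from by field_simp,
      le_div_iff₀ (by positivity)]
    have heq : 2 * Real.cos C / (π * Real.sin C) * (z - C) * Real.sin C ^ 2
        = Real.sin C * Real.cos C * (2 / π * (z - C)) := by
      field_simp
    rw [heq]
    exact hprod
  linarith

/-- The half-period `Y_C = 2∫_C^{π/2} ((sin z/sin C)^{2(n−1)} − 1)^{−1/2} dz`
of the spherical catenoid tends to `0` as `C → 0⁺`. -/
theorem spherical_catenoid_halfperiod_tendsto_zero
    (n : ℕ) (hn : 2 ≤ n) :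
    Filter.Tendsto
      (fun C : ℝ => 2 * ∫ z in C..(π / 2),
        ((Real.sin z / Real.sin C) ^ (2 * (n - 1)) - 1) ^ (-(1 : ℝ) / 2))
      (𝓝[>] (0 : ℝ)) (𝓝 0) := by
  have hπ : (0:ℝ) < π := Real.pi_pos
  set e : ℝ := -(1:ℝ) / 2 with he
  set h : ℝ → ℝ := fun C =>
    2 * (Real.sqrt (π * Real.sin C / (2 * Real.cos C)) * (2 * Real.sqrt (π / 2 - C))) with hh
  have hmem : Ioo (0:ℝ) (π / 4) ∈ 𝓝[>] (0:ℝ) :=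
    Ioo_mem_nhdsGT_of_mem ⟨le_refl 0, by positivity⟩
  -- tendsto of h
  have hh0 : h 0 = 0 := by simp [hh]
  have hhc : ContinuousAt h 0 := by
    have c1 : ContinuousAt (fun C : ℝ => π * Real.sin C / (2 * Real.cos C)) 0 := by
      apply ContinuousAt.div (by fun_prop) (by fun_prop)
      simp [Real.cos_zero]
    apply ContinuousAt.mul continuousAt_const
    exact ContinuousAt.mul (Real.continuous_sqrt.continuousAt.comp c1) (by fun_prop)
  have hhtendsto : Tendsto h (𝓝[>] (0:ℝ)) (𝓝 0) := by
    have := hhc.tendsto.mono_left (nhdsWithin_le_nhds (s := Ioi (0:ℝ)))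
    rwa [hh0] at this
  apply tendsto_of_tendsto_of_tendsto_of_le_of_le' tendsto_const_nhds hhtendsto
  · -- lower bound 0
    filter_upwards [hmem] with C hCmem
    obtain ⟨hC, hC4⟩ := hCmem
    have hsC : 0 < Real.sin C := Real.sin_pos_of_pos_of_lt_pi hC (by linarith)
    apply mul_nonneg (by norm_num)
    apply intervalIntegral.integral_nonneg (by linarith)
    intro z hz
    apply Real.rpow_nonneg
    have hsins : Real.sin C ≤ Real.sin z := by
      apply Real.strictMonoOn_sin.monotoneOn ⟨by linarith, by linarith⟩
        ⟨by linarith [hz.1], hz.2⟩ hz.1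
    have ht1 : 1 ≤ Real.sin z / Real.sin C := (one_le_div hsC).2 hsins
    have h1p : (1:ℝ) ≤ (Real.sin z / Real.sin C) ^ (2 * (n - 1)) := one_le_pow₀ ht1
    linarith
  · -- upper bound h
    filter_upwards [hmem] with C hCmem
    obtain ⟨hC, hC4⟩ := hCmem
    have hsC : 0 < Real.sin C := Real.sin_pos_of_pos_of_lt_pi hC (by linarith)
    have hcC : 0 < Real.cos C := Real.cos_pos_of_mem_Ioo ⟨by linarith, by linarith⟩
    set K : ℝ := 2 * Real.cos C / (π * Real.sin C) with hK
    have hKpos : 0 < K := by positivity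
    have hle : C ≤ π / 2 := by linarith
    -- the dominating function
    set g : ℝ → ℝ := fun z => K ^ e * (z - C) ^ e with hg
    have hgi : IntervalIntegrable g volume C (π / 2) := by
      have h1 : IntervalIntegrable (fun x : ℝ => x ^ e) volume 0 (π / 2 - C) :=
        intervalIntegral.intervalIntegrable_rpow' (by norm_num [he])
      have h2 := (h1.comp_sub_right C).const_mul (K ^ e)
      simpa [hg] using h2
    -- pointwise bound on Ioc
    have hbound : ∀ z ∈ Ioc C (π / 2),
        ((Real.sin z / Real.sin C) ^ (2 * (n - 1)) - 1) ^ e ≤ g z := by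
      intro z hz
      have hkey := sc_key_lower n hn hC hC4 hz.1 hz.2
      have hKz : 0 < K * (z - C) := by
        have : 0 < z - C := by linarith [hz.1]
        positivity
      calc ((Real.sin z / Real.sin C) ^ (2 * (n - 1)) - 1) ^ e
          ≤ (K * (z - C)) ^ e := by
            apply Real.rpow_le_rpow_of_nonpos hKz hkey (by norm_num [he])
        _ = g z := by
            rw [hg, Real.mul_rpow hKpos.le (by linarith [hz.1])]
    -- nonneg of integrand
    have hnonneg : ∀ z ∈ Ioc C (π / 2),
        0 ≤ ((Real.sin z / Real.sin C) ^ (2 * (n - 1)) - 1) ^ e := by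
      intro z hz
      apply Real.rpow_nonneg
      have hkey := sc_key_lower n hn hC hC4 hz.1 hz.2
      have : 0 ≤ 2 * Real.cos C / (π * Real.sin C) * (z - C) := by
        have : 0 ≤ z - C := by linarith [hz.1]
        positivity
      linarith
    -- integral comparison
    have hcomp : (∫ z in C..(π / 2),
        ((Real.sin z / Real.sin C) ^ (2 * (n - 1)) - 1) ^ e) ≤ ∫ z in C..(π / 2), g z := by
      rw [intervalIntegral.integral_of_le hle, intervalIntegral.integral_of_le hle]
      apply MeasureTheory.integral_mono_of_nonneg
      · exact MeasureTheory.ae_restrict_of_forall_mem measurableSet_Ioc hnonneg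
      · exact hgi.1
      · exact MeasureTheory.ae_restrict_of_forall_mem measurableSet_Ioc hbound
    -- compute integral of g
    have hgval : (∫ z in C..(π / 2), g z)
        = K ^ e * (2 * Real.sqrt (π / 2 - C)) := by
      rw [hg]
      rw [intervalIntegral.integral_const_mul]
      congr 1
      have hshift : (∫ z in C..(π / 2), (z - C) ^ e)
          = ∫ x in (C - C)..(π / 2 - C), x ^ e :=
        intervalIntegral.integral_comp_sub_right (fun u => u ^ e) C
      rw [hshift, sub_self]
      rw [integral_rpow (Or.inl (by norm_num [he]))]
      have he1 : e + 1 = (1:ℝ)/2 := by norm_num [he]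
      rw [he1, Real.zero_rpow (by norm_num), Real.sqrt_eq_rpow]
      ring
    have hKe : K ^ e = Real.sqrt (π * Real.sin C / (2 * Real.cos C)) := by
      rw [show (π * Real.sin C / (2 * Real.cos C)) = K⁻¹ from by rw [hK, inv_div],
        Real.sqrt_eq_rpow, Real.inv_rpow hKpos.le, ← Real.rpow_neg hKpos.le]
      congr 1
      norm_num [he]
    have hfinal : (∫ z in C..(π / 2),
        ((Real.sin z / Real.sin C) ^ (2 * (n - 1)) - 1) ^ e)
        ≤ Real.sqrt (π * Real.sin C / (2 * Real.cos C)) * (2 * Real.sqrt (π / 2 - C)) := by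
      rw [← hKe]
      calc _ ≤ ∫ z in C..(π / 2), g z := hcomp
        _ = _ := hgval
    rw [hh]
    linarith
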